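/- The loop Gamma functional is well defined: let t > 0, let B be Brownian motion with variance parameter t on [0,2π], let μ ∈ L²([0,2π],ℝ) with μ(u) ≥ 0 almost everywhere, and let z : [0,2π] → ℂ with Re z, Im z ∈ L²([0,2π]). Then the complex random variable exp( ∫₀^{2π} B_u z(u) du − ∫₀^{2π} μ(u) e^{B_u} du ) is integrable, so that the loop Gamma functional Γ̂_μ(z) := E[ exp( ∫₀^{2π} B_u z(u) du − ∫₀^{2π} μ(u) e^{B_u} du ) ] is well defined. -/

import Mathlib

open MeasureTheory ProbabilityTheory Real
open scoped NNReal ENNReal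

/-- `B` is a Brownian motion with variance parameter `t` on `[0, 2π]` under `P`:
a continuous centered Gaussian process with `B 0 = 0` and covariance
`E[B_u B_v] = t · min u v`. -/
structure IsBrownianMotion {Ω : Type*} [MeasurableSpace Ω] (P : Measure Ω)
    (t : ℝ) (B : ℝ → Ω → ℝ) : Prop where
  isProbabilityMeasure : IsProbabilityMeasure P
  measurable : ∀ u : ℝ, Measurable (B u)
  start_zero : ∀ ω, B 0 ω = 0
  continuous_paths : ∀ ω, ContinuousOn (fun u => B u ω) (Set.Icc 0 (2 * π))
  gaussian : ∀ (n : ℕ) (c u : Fin n → ℝ), (∀ i, u i ∈ Set.Icc 0 (2 * π)) →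
    P.map (fun ω => ∑ i, c i * B (u i) ω) =
      ProbabilityTheory.gaussianReal 0
        (Real.toNNReal (∑ i, ∑ j, c i * c j * (t * min (u i) (u j))))

lemma lintegral_exp_gaussianReal (v : ℝ≥0) :
    ∫⁻ x, ENNReal.ofReal (Real.exp x) ∂(gaussianReal 0 v)
      = ENNReal.ofReal (Real.exp ((v : ℝ) / 2)) := by
  by_cases hv : v = 0
  · simp [hv, MeasureTheory.lintegral_dirac]
  · have hvR : (v : ℝ) ≠ 0 := by exact_mod_cast hv
    rw [gaussianReal_of_var_ne_zero _ hv,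
      lintegral_withDensity_eq_lintegral_mul volume (measurable_gaussianPDF 0 v)
        (Real.measurable_exp.ennreal_ofReal)]
    have hpt : ∀ x : ℝ, (gaussianPDF 0 v * fun x => ENNReal.ofReal (Real.exp x)) x
        = ENNReal.ofReal (Real.exp ((v : ℝ) / 2)) * gaussianPDF v v x := by
      intro x
      simp only [Pi.mul_apply, gaussianPDF, ← ENNReal.ofReal_mul (gaussianPDFReal_nonneg 0 v x),
        ← ENNReal.ofReal_mul (Real.exp_nonneg _)]
      congr 1
      simp only [gaussianPDFReal]
      have key : rexp (-(x - 0) ^ 2 / (2 * (v:ℝ))) * rexp x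
          = rexp ((v:ℝ) / 2) * rexp (-(x - (v:ℝ)) ^ 2 / (2 * (v:ℝ))) := by
        rw [← Real.exp_add, ← Real.exp_add]
        congr 1
        field_simp
        ring
      rw [mul_assoc, key]
      ring
    simp_rw [hpt]
    rw [lintegral_const_mul _ (measurable_gaussianPDF v v), lintegral_gaussianPDF_eq_one v hv,
      mul_one]

lemma riemann_tendsto {h f : ℝ → ℝ}
    (hh : IntegrableOn h (Set.Ioc 0 (2*π)))
    (hf : ContinuousOn f (Set.Icc 0 (2*π))) :
    Filter.Tendsto (fun n : ℕ => ∑ i ∈ Finset.range n,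
        (∫ u in (2*π*(i:ℝ)/(n:ℝ))..(2*π*((i:ℝ)+1)/(n:ℝ)), h u) * f (2*π*((i:ℝ)+1)/(n:ℝ)))
      Filter.atTop (nhds (∫ u in (0:ℝ)..(2*π), h u * f u)) := by
  obtain ⟨M, hM⟩ := isCompact_Icc.exists_bound_of_continuousOn hf
  have hhf : IntegrableOn (fun u => h u * f u) (Set.Ioc 0 (2*π)) := by
    refine Integrable.mono' (hh.norm.mul_const M) ?_ ?_
    · exact hh.aestronglyMeasurable.mul
        ((hf.mono Set.Ioc_subset_Icc_self).aestronglyMeasurable measurableSet_Ioc)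
    · filter_upwards [ae_restrict_mem measurableSet_Ioc] with u hu
      rw [norm_mul]
      exact mul_le_mul_of_nonneg_left (hM u (Set.Ioc_subset_Icc_self hu)) (norm_nonneg _)
  rw [Metric.tendsto_atTop]
  intro ε hε
  set K := ∫ u in (0:ℝ)..(2*π), |h u| with hKdef
  have hK0 : 0 ≤ K :=
    intervalIntegral.integral_nonneg (by positivity) (fun u _ => abs_nonneg _)
  have hε' : 0 < ε / (K + 1) := by positivity
  obtain ⟨δ, hδ, hδ'⟩ := Metric.uniformContinuousOn_iff.mp
    (isCompact_Icc.uniformContinuousOn_of_continuous hf) (ε / (K+1)) hε'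
  obtain ⟨N, hN⟩ := exists_nat_gt (2*π/δ)
  refine ⟨max N 1, fun n hn => ?_⟩
  have hn1 : 1 ≤ n := le_trans (le_max_right N 1) hn
  have hnpos : (0:ℝ) < n := by exact_mod_cast hn1
  have hNn : 2*π/δ < (n:ℝ) := lt_of_lt_of_le hN (by exact_mod_cast le_trans (le_max_left N 1) hn)
  have hstep : 2*π/(n:ℝ) < δ := by
    rw [div_lt_iff₀ hnpos]
    linarith [(div_lt_iff₀ hδ).mp hNn]
  set a : ℕ → ℝ := fun i => 2*π*(i:ℝ)/(n:ℝ) with ha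
  have ha0 : a 0 = 0 := by simp [ha]
  have han : a n = 2*π := by simp only [ha]; field_simp [hnpos.ne']
  have hamono : ∀ i j : ℕ, i ≤ j → a i ≤ a j := by
    intro i j hij
    simp only [ha]
    gcongr 2*π*?_/(n:ℝ)
    exact_mod_cast hij
  have hmem : ∀ i ≤ n, a i ∈ Set.Icc 0 (2*π) := fun i hi =>
    ⟨by rw [← ha0]; exact hamono 0 i (Nat.zero_le _), by rw [← han]; exact hamono i n hi⟩
  have hdiff : ∀ i : ℕ, a (i+1) - a i = 2*π/(n:ℝ) := by
    intro i
    simp only [ha]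
    push_cast
    field_simp
    ring
  have hle : ∀ i : ℕ, a i ≤ a (i+1) := fun i => hamono i (i+1) (Nat.le_succ i)
  have hsub : ∀ i < n, Set.uIoc (a i) (a (i+1)) ⊆ Set.Ioc 0 (2*π) := by
    intro i hi
    rw [Set.uIoc_of_le (hle i)]
    exact Set.Ioc_subset_Ioc (hmem i hi.le).1 (hmem (i+1) hi).2
  have hint : ∀ g : ℝ → ℝ, IntegrableOn g (Set.Ioc 0 (2*π)) →
      ∀ i < n, IntervalIntegrable g volume (a i) (a (i+1)) := fun g hg i hi =>
    intervalIntegrable_iff.mpr (hg.mono_set (hsub i hi))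
  have hIeq : ∫ u in (0:ℝ)..(2*π), h u * f u
      = ∑ i ∈ Finset.range n, ∫ u in a i..a (i+1), h u * f u := by
    rw [intervalIntegral.sum_integral_adjacent_intervals (fun k hk => hint _ hhf k hk), ha0, han]
  have hKeq : K = ∑ i ∈ Finset.range n, ∫ u in a i..a (i+1), |h u| := by
    rw [intervalIntegral.sum_integral_adjacent_intervals (fun k hk => hint _ hh.abs k hk),
      ha0, han]
  have hcast : ∀ i : ℕ, a (i+1) = 2*π*((i:ℝ)+1)/(n:ℝ) := by
    intro i; simp only [ha]; push_cast; ring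
  have hgoalfun : ∀ i : ℕ,
      (∫ u in (2*π*(i:ℝ)/(n:ℝ))..(2*π*((i:ℝ)+1)/(n:ℝ)), h u) * f (2*π*((i:ℝ)+1)/(n:ℝ))
        = (∫ u in a i..a (i+1), h u) * f (a (i+1)) := by
    intro i; rw [hcast]
  calc dist (∑ i ∈ Finset.range n,
        (∫ u in (2*π*(i:ℝ)/(n:ℝ))..(2*π*((i:ℝ)+1)/(n:ℝ)), h u) * f (2*π*((i:ℝ)+1)/(n:ℝ)))
        (∫ u in (0:ℝ)..(2*π), h u * f u)
      = |∑ i ∈ Finset.range n, ((∫ u in a i..a (i+1), h u) * f (a (i+1))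
          - ∫ u in a i..a (i+1), h u * f u)| := by
        rw [Real.dist_eq, hIeq, ← Finset.sum_sub_distrib]
        congr 1
        exact Finset.sum_congr rfl (fun i _ => by rw [hgoalfun i])
    _ ≤ ∑ i ∈ Finset.range n, |(∫ u in a i..a (i+1), h u) * f (a (i+1))
          - ∫ u in a i..a (i+1), h u * f u| := Finset.abs_sum_le_sum_abs _ _
    _ ≤ ∑ i ∈ Finset.range n, ε/(K+1) * ∫ u in a i..a (i+1), |h u| := by
        refine Finset.sum_le_sum ?_
        intro i hi
        rw [Finset.mem_range] at hi
        rw [show (∫ u in a i..a (i+1), h u) * f (a (i+1))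
            = ∫ u in a i..a (i+1), h u * f (a (i+1)) from
            (intervalIntegral.integral_mul_const _ _).symm,
          ← intervalIntegral.integral_sub ((hint _ hh i hi).mul_const _) (hint _ hhf i hi)]
        have hgint : IntervalIntegrable (fun u => ε/(K+1) * |h u|) volume (a i) (a (i+1)) :=
          (hint _ hh.abs i hi).const_mul _
        have hae : ∀ᵐ u ∂(volume.restrict (Set.uIoc (a i) (a (i+1)))),
            ‖h u * f (a (i+1)) - h u * f u‖ ≤ ε/(K+1) * |h u| := by
          filter_upwards [ae_restrict_mem measurableSet_uIoc] with u hu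
          have hu' : u ∈ Set.Ioc (a i) (a (i+1)) := by rwa [Set.uIoc_of_le (hle i)] at hu
          have humem : u ∈ Set.Icc 0 (2*π) :=
            Set.Ioc_subset_Icc_self (hsub i hi hu)
          have hc : a (i+1) ∈ Set.Icc 0 (2*π) := hmem (i+1) hi
          have hdist : dist (a (i+1)) u < δ := by
            rw [Real.dist_eq, abs_of_nonneg (by linarith [hu'.2])]
            have h2 := hdiff i
            linarith [hu'.1, hstep]
          have hfd : |f (a (i+1)) - f u| < ε/(K+1) := by
            have := hδ' (a (i+1)) hc u humem hdist
            rwa [Real.dist_eq] at this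
          calc ‖h u * f (a (i+1)) - h u * f u‖ = |h u| * |f (a (i+1)) - f u| := by
                rw [Real.norm_eq_abs, ← mul_sub, abs_mul]
            _ ≤ |h u| * (ε/(K+1)) := mul_le_mul_of_nonneg_left hfd.le (abs_nonneg _)
            _ = ε/(K+1) * |h u| := mul_comm _ _
        calc ‖∫ u in a i..a (i+1), (h u * f (a (i+1)) - h u * f u)‖
            ≤ abs (∫ u in a i..a (i+1), ε/(K+1) * |h u|) :=
              intervalIntegral.norm_integral_le_abs_of_norm_le hae hgint
          _ = ε/(K+1) * ∫ u in a i..a (i+1), |h u| := by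
              rw [intervalIntegral.integral_const_mul, abs_of_nonneg]
              exact mul_nonneg hε'.le
                (intervalIntegral.integral_nonneg (hle i) (fun u _ => abs_nonneg _))
    _ = ε/(K+1) * K := by rw [← Finset.mul_sum, ← hKeq]
    _ < ε := by
        rw [div_mul_eq_mul_div, div_lt_iff₀ (by positivity)]
        nlinarith

lemma measurable_param_integral {Ω : Type*} [MeasurableSpace Ω] {f : ℝ → Ω → ℝ}
    (hfm : ∀ u, Measurable (f u))
    (hfc : ∀ ω, ContinuousOn (fun u => f u ω) (Set.Icc 0 (2*π)))
    {h : ℝ → ℝ} (hh : IntegrableOn h (Set.Ioc 0 (2*π))) :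
    Measurable (fun ω => ∫ u in (0:ℝ)..(2*π), h u * f u ω) := by
  refine measurable_of_tendsto_metrizable
    (f := fun n ω => ∑ i ∈ Finset.range n,
      (∫ u in (2*π*(i:ℝ)/(n:ℝ))..(2*π*((i:ℝ)+1)/(n:ℝ)), h u) * f (2*π*((i:ℝ)+1)/(n:ℝ)) ω)
    (fun n => Finset.measurable_sum _ (fun i _ => (hfm _).const_mul _)) ?_
  rw [tendsto_pi_nhds]
  intro ω
  exact riemann_tendsto hh (hfc ω)

lemma integrable_exp_integral {Ω : Type*} [MeasurableSpace Ω] (P : Measure Ω)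
    (t : ℝ) (ht : 0 < t) (B : ℝ → Ω → ℝ) (hB : IsBrownianMotion P t B)
    {h : ℝ → ℝ} (hh : IntegrableOn h (Set.Ioc 0 (2*π))) :
    Integrable (fun ω => Real.exp (∫ u in (0:ℝ)..(2*π), h u * B u ω)) P := by
  haveI := hB.isProbabilityMeasure
  set S : ℕ → Ω → ℝ := fun n ω => ∑ i ∈ Finset.range n,
    (∫ u in (2*π*(i:ℝ)/(n:ℝ))..(2*π*((i:ℝ)+1)/(n:ℝ)), h u) * B (2*π*((i:ℝ)+1)/(n:ℝ)) ω with hS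
  have hSmeas : ∀ n, Measurable (S n) := fun n =>
    Finset.measurable_sum _ (fun i _ => (hB.measurable _).const_mul _)
  have htend : ∀ ω, Filter.Tendsto (fun n => S n ω) Filter.atTop
      (nhds (∫ u in (0:ℝ)..(2*π), h u * B u ω)) := fun ω =>
    riemann_tendsto hh (hB.continuous_paths ω)
  have hGmeas : Measurable (fun ω => ∫ u in (0:ℝ)..(2*π), h u * B u ω) :=
    measurable_param_integral hB.measurable hB.continuous_paths hh
  set K := ∫ u in (0:ℝ)..(2*π), |h u| with hKdef
  have hK0 : 0 ≤ K :=
    intervalIntegral.integral_nonneg (by positivity) (fun u _ => abs_nonneg _)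
  set C := Real.exp (t * (2*π) * K^2 / 2) with hC
  have hmom : ∀ n : ℕ, ∫⁻ ω, ENNReal.ofReal (Real.exp (S n ω)) ∂P ≤ ENNReal.ofReal C := by
    intro n
    rcases Nat.eq_zero_or_pos n with hn0 | hn0
    · subst hn0
      simp only [hS, Finset.range_zero, Finset.sum_empty, Real.exp_zero, ENNReal.ofReal_one]
      rw [lintegral_const, measure_univ, mul_one]
      rw [show (1:ℝ≥0∞) = ENNReal.ofReal 1 by simp]
      apply ENNReal.ofReal_le_ofReal
      rw [hC]
      apply Real.one_le_exp
      positivity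
    · have hnpos : (0:ℝ) < n := by exact_mod_cast hn0
      set c : Fin n → ℝ := fun i =>
        ∫ u in (2*π*((i:ℕ):ℝ)/(n:ℝ))..(2*π*(((i:ℕ):ℝ)+1)/(n:ℝ)), h u with hc
      set uu : Fin n → ℝ := fun i => 2*π*(((i:ℕ):ℝ)+1)/(n:ℝ) with huu
      have humem : ∀ i : Fin n, uu i ∈ Set.Icc 0 (2*π) := by
        intro i
        constructor
        · simp only [huu]; positivity
        · simp only [huu]
          rw [div_le_iff₀ hnpos]
          have hi1 : ((i:ℕ):ℝ) + 1 ≤ (n:ℝ) := by exact_mod_cast i.isLt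
          nlinarith [pi_pos]
      have hmap := hB.gaussian n c uu humem
      have hSfmeas : Measurable (fun ω => ∑ i : Fin n, c i * B (uu i) ω) :=
        Finset.measurable_sum _ (fun i _ => (hB.measurable _).const_mul _)
      have hSeq : S n = fun ω => ∑ i : Fin n, c i * B (uu i) ω := by
        funext ω
        rw [hS]
        exact (Fin.sum_univ_eq_sum_range
          (fun k => (∫ u in (2*π*(k:ℝ)/(n:ℝ))..(2*π*((k:ℝ)+1)/(n:ℝ)), h u)
            * B (2*π*((k:ℝ)+1)/(n:ℝ)) ω) n).symm
      -- partition facts for the sum bound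
      set a : ℕ → ℝ := fun i => 2*π*(i:ℝ)/(n:ℝ) with ha
      have ha0 : a 0 = 0 := by simp [ha]
      have han : a n = 2*π := by simp only [ha]; field_simp [hnpos.ne']
      have hamono : ∀ i j : ℕ, i ≤ j → a i ≤ a j := by
        intro i j hij
        simp only [ha]
        gcongr 2*π*?_/(n:ℝ)
        exact_mod_cast hij
      have hmem : ∀ i ≤ n, a i ∈ Set.Icc 0 (2*π) := fun i hi =>
        ⟨by rw [← ha0]; exact hamono 0 i (Nat.zero_le _), by rw [← han]; exact hamono i n hi⟩
      have hle : ∀ i : ℕ, a i ≤ a (i+1) := fun i => hamono i (i+1) (Nat.le_succ i)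
      have hsub : ∀ i < n, Set.uIoc (a i) (a (i+1)) ⊆ Set.Ioc 0 (2*π) := by
        intro i hi
        rw [Set.uIoc_of_le (hle i)]
        exact Set.Ioc_subset_Ioc (hmem i hi.le).1 (hmem (i+1) hi).2
      have hhabs : IntegrableOn (fun u => |h u|) (Set.Ioc 0 (2*π)) volume := hh.abs
      have hint : ∀ i < n, IntervalIntegrable (fun u => |h u|) volume (a i) (a (i+1)) :=
        fun i hi => intervalIntegrable_iff.mpr (hhabs.mono_set (hsub i hi))
      have hKeq : K = ∑ i ∈ Finset.range n, ∫ u in a i..a (i+1), |h u| := by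
        rw [intervalIntegral.sum_integral_adjacent_intervals hint, ha0, han]
      have hcast : ∀ i : ℕ, a (i+1) = 2*π*((i:ℝ)+1)/(n:ℝ) := by
        intro i; simp only [ha]; push_cast; ring
      have hsumc : ∑ i : Fin n, |c i| ≤ K := by
        have heq : ∑ i : Fin n, |c i|
            = ∑ i ∈ Finset.range n, |∫ u in a i..a (i+1), h u| := by
          rw [← Fin.sum_univ_eq_sum_range (fun k => |∫ u in a k..a (k+1), h u|) n]
          refine Finset.sum_congr rfl (fun i _ => ?_)
          simp only [hc]
          rw [hcast]
        rw [heq, hKeq]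
        refine Finset.sum_le_sum (fun i hi => ?_)
        rw [Finset.mem_range] at hi
        exact intervalIntegral.abs_integral_le_integral_abs (hle i)
      have hsumc0 : 0 ≤ ∑ i : Fin n, |c i| :=
        Finset.sum_nonneg (fun i _ => abs_nonneg _)
      have hvar : ∑ i : Fin n, ∑ j : Fin n, c i * c j * (t * min (uu i) (uu j))
          ≤ t * (2*π) * K^2 := by
        have hterm : ∀ i j : Fin n, c i * c j * (t * min (uu i) (uu j))
            ≤ |c i| * |c j| * (t * (2*π)) := by
          intro i j
          have h1 : 0 ≤ min (uu i) (uu j) := le_min (humem i).1 (humem j).1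
          have h2 : min (uu i) (uu j) ≤ 2*π := min_le_of_left_le (humem i).2
          calc c i * c j * (t * min (uu i) (uu j))
              ≤ |c i * c j| * (t * min (uu i) (uu j)) :=
                mul_le_mul_of_nonneg_right (le_abs_self _) (by positivity)
            _ ≤ |c i * c j| * (t * (2*π)) :=
                mul_le_mul_of_nonneg_left (by nlinarith) (abs_nonneg _)
            _ = |c i| * |c j| * (t * (2*π)) := by rw [abs_mul]
        calc ∑ i : Fin n, ∑ j : Fin n, c i * c j * (t * min (uu i) (uu j))
            ≤ ∑ i : Fin n, ∑ j : Fin n, |c i| * |c j| * (t * (2*π)) :=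
              Finset.sum_le_sum (fun i _ => Finset.sum_le_sum (fun j _ => hterm i j))
          _ = (∑ i : Fin n, |c i|) * (∑ j : Fin n, |c j|) * (t * (2*π)) := by
              rw [Finset.sum_mul_sum, Finset.sum_mul]
              exact Finset.sum_congr rfl (fun i _ => by rw [Finset.sum_mul])
          _ ≤ K * K * (t * (2*π)) :=
              mul_le_mul_of_nonneg_right (mul_le_mul hsumc hsumc hsumc0 hK0)
                (by positivity)
          _ = t * (2*π) * K^2 := by ring
      have hvle : ((Real.toNNReal (∑ i : Fin n, ∑ j : Fin n,
          c i * c j * (t * min (uu i) (uu j)))) : ℝ) ≤ t * (2*π) * K^2 := by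
        rw [Real.coe_toNNReal']
        exact max_le hvar (by positivity)
      calc ∫⁻ ω, ENNReal.ofReal (Real.exp (S n ω)) ∂P
          = ∫⁻ x, ENNReal.ofReal (Real.exp x)
              ∂(P.map (fun ω => ∑ i : Fin n, c i * B (uu i) ω)) := by
            rw [MeasureTheory.lintegral_map Real.measurable_exp.ennreal_ofReal hSfmeas, hSeq]
        _ = ENNReal.ofReal (Real.exp (((Real.toNNReal (∑ i : Fin n, ∑ j : Fin n,
              c i * c j * (t * min (uu i) (uu j)))) : ℝ) / 2)) := by
            rw [hmap, lintegral_exp_gaussianReal]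
        _ ≤ ENNReal.ofReal C := by
            apply ENNReal.ofReal_le_ofReal
            rw [hC]
            apply Real.exp_le_exp.mpr
            linarith
  have hfatou : ∫⁻ ω, ENNReal.ofReal (Real.exp (∫ u in (0:ℝ)..(2*π), h u * B u ω)) ∂P
      ≤ ENNReal.ofReal C := by
    have hlim : ∀ ω, Filter.Tendsto (fun n => ENNReal.ofReal (Real.exp (S n ω))) Filter.atTop
        (nhds (ENNReal.ofReal (Real.exp (∫ u in (0:ℝ)..(2*π), h u * B u ω)))) := fun ω =>
      (ENNReal.continuous_ofReal.tendsto _).comp ((Real.continuous_exp.tendsto _).comp (htend ω))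
    calc ∫⁻ ω, ENNReal.ofReal (Real.exp (∫ u in (0:ℝ)..(2*π), h u * B u ω)) ∂P
        = ∫⁻ ω, Filter.liminf (fun n => ENNReal.ofReal (Real.exp (S n ω))) Filter.atTop ∂P := by
          congr 1
          funext ω
          exact ((hlim ω).liminf_eq).symm
      _ ≤ Filter.liminf (fun n => ∫⁻ ω, ENNReal.ofReal (Real.exp (S n ω)) ∂P) Filter.atTop :=
          lintegral_liminf_le (fun n => (Real.measurable_exp.comp (hSmeas n)).ennreal_ofReal)
      _ ≤ ENNReal.ofReal C :=
          le_trans (Filter.liminf_le_liminf (Filter.Eventually.of_forall hmom))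
            (Filter.liminf_const (ENNReal.ofReal C)).le
  refine ⟨(Real.measurable_exp.comp hGmeas).aestronglyMeasurable, ?_⟩
  rw [HasFiniteIntegral]
  have heq : ∀ ω : Ω, ‖Real.exp (∫ u in (0:ℝ)..(2*π), h u * B u ω)‖ₑ
      = ENNReal.ofReal (Real.exp (∫ u in (0:ℝ)..(2*π), h u * B u ω)) := by
    intro ω
    rw [← ofReal_norm, Real.norm_of_nonneg (Real.exp_nonneg _)]
  simp_rw [heq]
  exact lt_of_le_of_lt hfatou ENNReal.ofReal_lt_top

/-- The loop Gamma functional is well defined: for `t > 0`, `B` a Brownian motion with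
variance parameter `t` on `[0,2π]`, `μ ∈ L²([0,2π],ℝ)` with `μ ≥ 0` a.e., and
`z : [0,2π] → ℂ` with `Re z, Im z ∈ L²([0,2π])`, the complex random variable
`exp(∫₀^{2π} B_u z(u) du - ∫₀^{2π} μ(u) e^{B_u} du)` is integrable, so that
`Γ̂_μ(z) = E[exp(∫₀^{2π} B_u z(u) du - ∫₀^{2π} μ(u) e^{B_u} du)]` is well defined. -/
theorem loopGamma_well_defined {Ω : Type*} [MeasurableSpace Ω] (P : Measure Ω)
    (t : ℝ) (ht : 0 < t) (B : ℝ → Ω → ℝ) (hB : IsBrownianMotion P t B)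
    (μ : ℝ → ℝ) (hμ2 : MemLp μ 2 (volume.restrict (Set.Ioc 0 (2 * π))))
    (hμ0 : ∀ᵐ u ∂(volume.restrict (Set.Ioc 0 (2 * π))), 0 ≤ μ u)
    (z : ℝ → ℂ)
    (hzRe : MemLp (fun u => (z u).re) 2 (volume.restrict (Set.Ioc 0 (2 * π))))
    (hzIm : MemLp (fun u => (z u).im) 2 (volume.restrict (Set.Ioc 0 (2 * π)))) :
    Integrable (fun ω => Complex.exp
      ((∫ u in (0 : ℝ)..(2 * π), (B u ω : ℂ) * z u)
        - ((∫ u in (0 : ℝ)..(2 * π), μ u * Real.exp (B u ω) : ℝ) : ℂ))) P := by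
  have hT : (0:ℝ) ≤ 2 * π := by positivity
  haveI := hB.isProbabilityMeasure
  haveI : IsFiniteMeasure (volume.restrict (Set.Ioc (0:ℝ) (2 * π))) :=
    ⟨by rw [Measure.restrict_apply_univ]; exact measure_Ioc_lt_top⟩
  have hre : IntegrableOn (fun u => (z u).re) (Set.Ioc 0 (2 * π)) volume :=
    hzRe.integrable one_le_two
  have him : IntegrableOn (fun u => (z u).im) (Set.Ioc 0 (2 * π)) volume :=
    hzIm.integrable one_le_two
  have hmu : IntegrableOn μ (Set.Ioc 0 (2 * π)) volume := hμ2.integrable one_le_two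
  have hzaesm : AEStronglyMeasurable z (volume.restrict (Set.Ioc 0 (2 * π))) := by
    have hz : z = fun u => ((z u).re : ℂ) + ((z u).im : ℂ) * Complex.I := by
      funext u
      rw [Complex.re_add_im]
    rw [hz]
    exact ((Complex.continuous_ofReal.comp_aestronglyMeasurable hre.aestronglyMeasurable).add
      ((Complex.continuous_ofReal.comp_aestronglyMeasurable him.aestronglyMeasurable).mul_const _))
  have hFint : ∀ ω, IntegrableOn (fun u => (B u ω : ℂ) * z u) (Set.Ioc 0 (2 * π)) volume := by
    intro ω
    obtain ⟨M, hM⟩ := isCompact_Icc.exists_bound_of_continuousOn (hB.continuous_paths ω)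
    have hzabs : Integrable (fun u => |(z u).re| + |(z u).im|)
        (volume.restrict (Set.Ioc 0 (2 * π))) := hre.abs.add him.abs
    refine Integrable.mono' (hzabs.const_mul M) ?_ ?_
    · exact (Complex.continuous_ofReal.comp_aestronglyMeasurable
        (((hB.continuous_paths ω).mono Set.Ioc_subset_Icc_self).aestronglyMeasurable
          measurableSet_Ioc)).mul hzaesm
    · filter_upwards [ae_restrict_mem measurableSet_Ioc] with u hu
      rw [norm_mul]
      have h1 : ‖(B u ω : ℂ)‖ ≤ M := by
        rw [Complex.norm_real]
        exact hM u (Set.Ioc_subset_Icc_self hu)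
      have h2 : ‖z u‖ ≤ |(z u).re| + |(z u).im| := Complex.norm_le_abs_re_add_abs_im _
      exact mul_le_mul h1 h2 (norm_nonneg _) (le_trans (norm_nonneg _) h1)
  have hexp_eq : ∀ ω, (∫ u in (0:ℝ)..(2 * π), (B u ω : ℂ) * z u)
      - ((∫ u in (0:ℝ)..(2 * π), μ u * Real.exp (B u ω) : ℝ) : ℂ)
      = (((∫ u in (0:ℝ)..(2 * π), (z u).re * B u ω : ℝ) : ℂ)
          + ((∫ u in (0:ℝ)..(2 * π), (z u).im * B u ω : ℝ) : ℂ) * Complex.I)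
        - ((∫ u in (0:ℝ)..(2 * π), μ u * Real.exp (B u ω) : ℝ) : ℂ) := by
    intro ω
    congr 1
    have e1 : (∫ u in Set.Ioc (0:ℝ) (2*π), RCLike.re ((B u ω : ℂ) * z u))
        = ∫ u in Set.Ioc (0:ℝ) (2*π), (z u).re * B u ω :=
      integral_congr_ae (Filter.Eventually.of_forall (fun u => by
        simp only [RCLike.re_to_complex, Complex.mul_re, Complex.ofReal_re, Complex.ofReal_im]
        ring))
    have e2 : (∫ u in Set.Ioc (0:ℝ) (2*π), RCLike.im ((B u ω : ℂ) * z u))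
        = ∫ u in Set.Ioc (0:ℝ) (2*π), (z u).im * B u ω :=
      integral_congr_ae (Filter.Eventually.of_forall (fun u => by
        simp only [RCLike.im_to_complex, Complex.mul_im, Complex.ofReal_re, Complex.ofReal_im]
        ring))
    calc ∫ u in (0:ℝ)..(2 * π), (B u ω : ℂ) * z u
        = ∫ u in Set.Ioc (0:ℝ) (2*π), (B u ω : ℂ) * z u := intervalIntegral.integral_of_le hT
      _ = ((∫ u in Set.Ioc (0:ℝ) (2*π), RCLike.re ((B u ω : ℂ) * z u) : ℝ) : ℂ)
          + ((∫ u in Set.Ioc (0:ℝ) (2*π), RCLike.im ((B u ω : ℂ) * z u) : ℝ) : ℂ) * RCLike.I :=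
          (setIntegral_re_add_im (hFint ω)).symm
      _ = ((∫ u in (0:ℝ)..(2 * π), (z u).re * B u ω : ℝ) : ℂ)
          + ((∫ u in (0:ℝ)..(2 * π), (z u).im * B u ω : ℝ) : ℂ) * Complex.I := by
          rw [e1, e2, RCLike.I_to_complex, intervalIntegral.integral_of_le hT,
            intervalIntegral.integral_of_le hT]
  have hR1 : Measurable (fun ω => ∫ u in (0:ℝ)..(2 * π), (z u).re * B u ω) :=
    measurable_param_integral (f := B) hB.measurable hB.continuous_paths hre
  have hR2 : Measurable (fun ω => ∫ u in (0:ℝ)..(2 * π), (z u).im * B u ω) :=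
    measurable_param_integral (f := B) hB.measurable hB.continuous_paths him
  have hR3 : Measurable (fun ω => ∫ u in (0:ℝ)..(2 * π), μ u * Real.exp (B u ω)) :=
    measurable_param_integral (f := fun u ω => Real.exp (B u ω))
      (fun u => Real.measurable_exp.comp (hB.measurable u))
      (fun ω => Real.continuous_exp.comp_continuousOn (hB.continuous_paths ω)) hmu
  have hdom : Integrable (fun ω => Real.exp (∫ u in (0:ℝ)..(2 * π), (z u).re * B u ω)) P :=
    integrable_exp_integral P t ht B hB hre
  refine Integrable.mono' hdom ?_ ?_
  · have hfun : (fun ω => Complex.exp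
        ((∫ u in (0 : ℝ)..(2 * π), (B u ω : ℂ) * z u)
          - ((∫ u in (0 : ℝ)..(2 * π), μ u * Real.exp (B u ω) : ℝ) : ℂ)))
        = fun ω => Complex.exp
          ((((∫ u in (0:ℝ)..(2 * π), (z u).re * B u ω : ℝ) : ℂ)
            + ((∫ u in (0:ℝ)..(2 * π), (z u).im * B u ω : ℝ) : ℂ) * Complex.I)
          - ((∫ u in (0:ℝ)..(2 * π), μ u * Real.exp (B u ω) : ℝ) : ℂ)) :=
      funext fun ω => by rw [hexp_eq ω]
    rw [hfun]
    apply Measurable.aestronglyMeasurable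
    exact Complex.measurable_exp.comp
      (((Complex.measurable_ofReal.comp hR1).add
        ((Complex.measurable_ofReal.comp hR2).mul_const _)).sub
        (Complex.measurable_ofReal.comp hR3))
  · refine Filter.Eventually.of_forall (fun ω => ?_)
    rw [hexp_eq ω, Complex.norm_exp]
    apply Real.exp_le_exp.mpr
    have hR3nonneg : 0 ≤ ∫ u in (0:ℝ)..(2 * π), μ u * Real.exp (B u ω) := by
      rw [intervalIntegral.integral_of_le hT]
      refine integral_nonneg_of_ae ?_
      filter_upwards [hμ0] with u hu
      exact mul_nonneg hu (Real.exp_nonneg _)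
    have : ((((∫ u in (0:ℝ)..(2 * π), (z u).re * B u ω : ℝ) : ℂ)
          + ((∫ u in (0:ℝ)..(2 * π), (z u).im * B u ω : ℝ) : ℂ) * Complex.I)
        - ((∫ u in (0:ℝ)..(2 * π), μ u * Real.exp (B u ω) : ℝ) : ℂ)).re
        = (∫ u in (0:ℝ)..(2 * π), (z u).re * B u ω)
          - ∫ u in (0:ℝ)..(2 * π), μ u * Real.exp (B u ω) := by
      simp
    rw [this]
    linarith
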